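/- Let K be an A-field and let Φ (dimension d), Ψ (dimension e) and ζ (dimension f) be t-modules over K with Hom_τ(Ψ,ζ) = 0. Let δ_t = U·Φ_t − Ψ_t·U for some U ∈ Mat_{e×d}(K{τ}) (a split biderivation in Der(Φ,Ψ)), and let Υ be the (d+e)-dimensional t-module with block matrix Υ_t = [[Φ_t, 0],[δ_t, Ψ_t]]. Writing a biderivation from Υ to ζ as a block row (δ₁ | δ₂) with δ₁ ∈ Mat_{f×d}(K{τ}) and δ₂ ∈ Mat_{f×e}(K{τ}), the maps i : Ext^1_τ(Φ,ζ) → Ext^1_τ(Υ,ζ), [δ₁] ↦ [(−δ₁ | 0)], and π : Ext^1_τ(Υ,ζ) → Ext^1_τ(Ψ,ζ), [(δ₁ | δ₂)] ↦ [−δ₂], are well-defined 𝔽_q[t]-module homomorphisms forming a short exact sequence 0 → Ext^1_τ(Φ,ζ) → Ext^1_τ(Υ,ζ) → Ext^1_τ(Ψ,ζ) → 0, and this sequence splits: the assignment [δ₂] ↦ [(δ₂·U | −δ₂)] is a well-defined 𝔽_q[t]-module homomorphism g with π∘g = id. -/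

import Mathlib

open Polynomial Matrix Finset

noncomputable section

/-- Twisted ("skew") multiplication of polynomials in `τ`, determined by the rule
`τ · c = c^q · τ`:  `(Σᵢ aᵢτ^i) · (Σⱼ bⱼτ^j) = Σ_{i,j} aᵢ bⱼ^(q^i) τ^(i+j)`. -/
def twMul {K : Type*} [Field K] (q : ℕ) (f g : Polynomial K) : Polynomial K :=
  f.sum fun i a => g.sum fun j b => Polynomial.C (a * b ^ q ^ i) * Polynomial.X ^ (i + j)

/-- Twisted multiplication of matrices over the twisted polynomial ring `K{τ}`. -/
def twMatMul {K : Type*} [Field K] (q : ℕ) {α β γ : Type*} [Fintype β]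
    (A : Matrix α β (Polynomial K)) (B : Matrix β γ (Polynomial K)) :
    Matrix α γ (Polynomial K) :=
  Matrix.of fun i k => ∑ j, twMul q (A i j) (B j k)

/-- `ψ` is (the value at `t` of) a Drinfeld module of rank `r` over the `A`-field `(K, θ)`. -/
def IsDrinfeld {K : Type*} [Field K] (θ : K) (r : ℕ) (ψ : Polynomial K) : Prop :=
  1 ≤ r ∧ ψ.coeff 0 = θ ∧ ψ.natDegree = r ∧ ψ.coeff r ≠ 0

/-- `Υ` is (the value at `t` of) a triangular t-module of dimension `n` with diagonal
Drinfeld modules `ψ 0 = ψ₁, …, ψ (n-1) = ψₙ` of ranks `r 0, …, r (n-1)`:  `Υ` is lower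
triangular and its `(k,k)` diagonal entry is `ψ k.rev` (so `ψₙ` is top-left and
`ψ₁` is bottom-right). -/
def IsTriangular {K : Type*} [Field K] (θ : K) {n : ℕ}
    (Υ : Matrix (Fin n) (Fin n) (Polynomial K))
    (ψ : Fin n → Polynomial K) (r : Fin n → ℕ) : Prop :=
  (∀ i j : Fin n, i < j → Υ i j = 0) ∧
  (∀ k : Fin n, Υ k k = ψ k.rev) ∧
  (∀ i : Fin n, IsDrinfeld θ (r i) (ψ i))

/-- `Φt` is (the value at `t` of) a t-module: `∂Φ_t = θ·I + N` with `N` nilpotent. -/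
def IsTModule {K : Type*} [Field K] (θ : K) {ι : Type*} [Fintype ι] [DecidableEq ι]
    (Φt : Matrix ι ι (Polynomial K)) : Prop :=
  ∃ N : Matrix ι ι K, IsNilpotent N ∧
    (Matrix.of fun i j => (Φt i j).coeff 0) = θ • (1 : Matrix ι ι K) + N

/-- The inner biderivation `δ^{(V)} = V·X_t − ζ_t·V` from the t-module `X` to `ζ`. -/
def innerBi {K : Type*} [Field K] (q : ℕ) {α ι : Type*} [Fintype α] [Fintype ι]
    (Xt : Matrix α α (Polynomial K)) (ζt : Matrix ι ι (Polynomial K))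
    (V : Matrix ι α (Polynomial K)) : Matrix ι α (Polynomial K) :=
  twMatMul q V Xt - twMatMul q ζt V

/-- Two biderivations from `X` to `ζ` represent the same class in
`Ext¹_τ(X,ζ) = Der(X,ζ)/Der_in(X,ζ)`. -/
def ExtEq {K : Type*} [Field K] (q : ℕ) {α ι : Type*} [Fintype α] [Fintype ι]
    (Xt : Matrix α α (Polynomial K)) (ζt : Matrix ι ι (Polynomial K))
    (δ δ' : Matrix ι α (Polynomial K)) : Prop :=
  ∃ V : Matrix ι α (Polynomial K), δ - δ' = innerBi q Xt ζt V


set_option linter.unusedSectionVars false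
set_option maxHeartbeats 1000000

section TwLemmas

variable {K : Type*} [Field K] {q : ℕ}

lemma twMul_zero_left (g : K[X]) : twMul q 0 g = 0 := by
  simp [twMul, Polynomial.sum]

lemma twMul_zero_right (f : K[X]) : twMul q f 0 = 0 := by
  simp [twMul, Polynomial.sum]

lemma twMul_add_left (f f' g : K[X]) :
    twMul q (f + f') g = twMul q f g + twMul q f' g := by
  unfold twMul
  refine Polynomial.sum_add_index f f' _ (fun i => ?_) (fun i a a' => ?_)
  · simp [Polynomial.sum]
  · rw [← Polynomial.sum_add]
    congr 1; funext j b
    rw [add_mul, map_add, add_mul]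

lemma twMul_add_right (hq0 : q ≠ 0)
    (hF : ∀ (x y : K) (n : ℕ), (x + y) ^ q ^ n = x ^ q ^ n + y ^ q ^ n)
    (f g g' : K[X]) : twMul q f (g + g') = twMul q f g + twMul q f g' := by
  unfold twMul
  rw [← Polynomial.sum_add]
  congr 1; funext i a
  refine Polynomial.sum_add_index g g' _ (fun j => ?_) (fun j b b' => ?_)
  · simp [zero_pow (pow_ne_zero i hq0)]
  · rw [hF, mul_add, map_add, add_mul]

lemma twMul_neg_left (f g : K[X]) : twMul q (-f) g = -twMul q f g := by
  have := twMul_add_left (q := q) (-f) f g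
  simp [twMul_zero_left] at this
  exact eq_neg_of_add_eq_zero_left this.symm

lemma twMul_sub_left (f f' g : K[X]) :
    twMul q (f - f') g = twMul q f g - twMul q f' g := by
  rw [sub_eq_add_neg, twMul_add_left, twMul_neg_left, sub_eq_add_neg]

section
variable (hq0 : q ≠ 0)
    (hF : ∀ (x y : K) (n : ℕ), (x + y) ^ q ^ n = x ^ q ^ n + y ^ q ^ n)
include hq0 hF

lemma twMul_neg_right (f g : K[X]) : twMul q f (-g) = -twMul q f g := by
  have := twMul_add_right hq0 hF f (-g) g
  simp [twMul_zero_right] at this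
  exact eq_neg_of_add_eq_zero_left this.symm

lemma twMul_sub_right (f g g' : K[X]) :
    twMul q f (g - g') = twMul q f g - twMul q f g' := by
  rw [sub_eq_add_neg, twMul_add_right hq0 hF, twMul_neg_right hq0 hF, sub_eq_add_neg]

lemma twMul_sum_right {ι : Type*} (s : Finset ι) (f : K[X]) (F : ι → K[X]) :
    twMul q f (∑ x ∈ s, F x) = ∑ x ∈ s, twMul q f (F x) := by
  classical
  induction s using Finset.induction_on with
  | empty => simp [twMul_zero_right]
  | insert _ _ h ih => rw [Finset.sum_insert h, Finset.sum_insert h,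
      twMul_add_right hq0 hF, ih]

end

lemma twMul_sum_left {ι : Type*} (s : Finset ι) (F : ι → K[X]) (g : K[X]) :
    twMul q (∑ x ∈ s, F x) g = ∑ x ∈ s, twMul q (F x) g := by
  classical
  induction s using Finset.induction_on with
  | empty => simp [twMul_zero_left]
  | insert _ _ h ih => rw [Finset.sum_insert h, Finset.sum_insert h, twMul_add_left, ih]

lemma twMul_monomial (hq0 : q ≠ 0) (i j : ℕ) (a b : K) :
    twMul q (monomial i a) (monomial j b) = monomial (i + j) (a * b ^ q ^ i) := by
  unfold twMul
  rw [Polynomial.sum_monomial_index, Polynomial.sum_monomial_index]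
  · rw [C_mul_X_pow_eq_monomial]
  · simp [zero_pow (pow_ne_zero i hq0)]
  · rw [Polynomial.sum_monomial_index] <;>
      simp [zero_pow (pow_ne_zero i hq0), Polynomial.sum]

lemma twMul_assoc (hq0 : q ≠ 0)
    (hF : ∀ (x y : K) (n : ℕ), (x + y) ^ q ^ n = x ^ q ^ n + y ^ q ^ n)
    (f g h : K[X]) : twMul q (twMul q f g) h = twMul q f (twMul q g h) := by
  induction f using Polynomial.induction_on' with
  | add p r hp hr => rw [twMul_add_left, twMul_add_left, twMul_add_left, hp, hr]
  | monomial i a =>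
    induction g using Polynomial.induction_on' with
    | add p r hp hr => rw [twMul_add_right hq0 hF, twMul_add_left,
        twMul_add_left, twMul_add_right hq0 hF, hp, hr]
    | monomial j b =>
      induction h using Polynomial.induction_on' with
      | add p r hp hr => rw [twMul_add_right hq0 hF, twMul_add_right hq0 hF,
          twMul_add_right hq0 hF, hp, hr]
      | monomial k c =>
        rw [twMul_monomial hq0, twMul_monomial hq0, twMul_monomial hq0,
          twMul_monomial hq0]
        congr 1
        · rw [add_assoc]
        · rw [mul_pow, mul_assoc, ← pow_mul, pow_add, mul_comm (q ^ i)]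

section Mat
variable {α β γ δ : Type*} [Fintype α] [Fintype β] [Fintype γ]

lemma twMatMul_zero_left (B : Matrix β γ K[X]) :
    twMatMul q (0 : Matrix α β K[X]) B = 0 := by
  ext i k; simp [twMatMul, twMul_zero_left]

lemma twMatMul_zero_right (A : Matrix α β K[X]) :
    twMatMul q A (0 : Matrix β γ K[X]) = 0 := by
  ext i k; simp [twMatMul, twMul_zero_right]

lemma twMatMul_add_left (A A' : Matrix α β K[X]) (B : Matrix β γ K[X]) :
    twMatMul q (A + A') B = twMatMul q A B + twMatMul q A' B := by
  ext i k; simp [twMatMul, twMul_add_left, Finset.sum_add_distrib]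

lemma twMatMul_neg_left (A : Matrix α β K[X]) (B : Matrix β γ K[X]) :
    twMatMul q (-A) B = -twMatMul q A B := by
  ext i k; simp [twMatMul, twMul_neg_left]

lemma twMatMul_sub_left (A A' : Matrix α β K[X]) (B : Matrix β γ K[X]) :
    twMatMul q (A - A') B = twMatMul q A B - twMatMul q A' B := by
  rw [sub_eq_add_neg, twMatMul_add_left, twMatMul_neg_left, sub_eq_add_neg]

section
variable (hq0 : q ≠ 0)
    (hF : ∀ (x y : K) (n : ℕ), (x + y) ^ q ^ n = x ^ q ^ n + y ^ q ^ n)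
include hq0 hF

lemma twMatMul_add_right (A : Matrix α β K[X]) (B B' : Matrix β γ K[X]) :
    twMatMul q A (B + B') = twMatMul q A B + twMatMul q A B' := by
  ext i k; simp [twMatMul, twMul_add_right hq0 hF, Finset.sum_add_distrib]

lemma twMatMul_neg_right (A : Matrix α β K[X]) (B : Matrix β γ K[X]) :
    twMatMul q A (-B) = -twMatMul q A B := by
  ext i k; simp [twMatMul, twMul_neg_right hq0 hF]

lemma twMatMul_sub_right (A : Matrix α β K[X]) (B B' : Matrix β γ K[X]) :
    twMatMul q A (B - B') = twMatMul q A B - twMatMul q A B' := by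
  rw [sub_eq_add_neg, twMatMul_add_right hq0 hF, twMatMul_neg_right hq0 hF,
    sub_eq_add_neg]

lemma twMatMul_assoc (A : Matrix α β K[X]) (B : Matrix β γ K[X])
    (C : Matrix γ δ K[X]) :
    twMatMul q (twMatMul q A B) C = twMatMul q A (twMatMul q B C) := by
  refine Matrix.ext fun i l => ?_
  simp only [twMatMul, Matrix.of_apply]
  calc ∑ k, twMul q (∑ j, twMul q (A i j) (B j k)) (C k l)
      = ∑ k, ∑ j, twMul q (twMul q (A i j) (B j k)) (C k l) := by
        simp [twMul_sum_left]
    _ = ∑ j, ∑ k, twMul q (A i j) (twMul q (B j k) (C k l)) := by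
        rw [Finset.sum_comm]
        simp [twMul_assoc hq0 hF]
    _ = ∑ j, twMul q (A i j) (∑ k, twMul q (B j k) (C k l)) := by
        simp [twMul_sum_right hq0 hF]

end

lemma twMatMul_fromColumns_fromBlocks {α' : Type*} [Fintype α']
    (A : Matrix δ α K[X]) (B : Matrix δ α' K[X]) (P : Matrix α α K[X])
    (D : Matrix α' α K[X]) (S : Matrix α' α' K[X]) :
    twMatMul q (fromCols A B) (fromBlocks P 0 D S) =
      fromCols (twMatMul q A P + twMatMul q B D) (twMatMul q B S) := by
  ext i (j | j) <;>
    simp [twMatMul, Fintype.sum_sum_type, twMul_zero_right, Finset.sum_add_distrib]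

lemma twMatMul_fromColumns_right {α' : Type*} [Fintype α'] (Z : Matrix γ γ K[X])
    (A : Matrix γ α K[X]) (B : Matrix γ α' K[X]) :
    twMatMul q Z (fromCols A B) =
      fromCols (twMatMul q Z A) (twMatMul q Z B) := by
  ext i (j | j) <;> simp [twMatMul]

lemma toColumns₂_twMatMul {α' : Type*} [Fintype α'] (Z : Matrix γ γ K[X])
    (A : Matrix γ (α ⊕ α') K[X]) :
    (twMatMul q Z A).toCols₂ = twMatMul q Z A.toCols₂ := rfl

end Mat

lemma fromColumns_sub' {m n₁ n₂ R : Type*} [Sub R] (A₁ B₁ : Matrix m n₁ R)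
    (A₂ B₂ : Matrix m n₂ R) :
    fromCols A₁ A₂ - fromCols B₁ B₂ = fromCols (A₁ - B₁) (A₂ - B₂) := by
  ext i (j | j) <;> simp

lemma fromColumns_zero' {m n₁ n₂ R : Type*} [Zero R] :
    fromCols (0 : Matrix m n₁ R) (0 : Matrix m n₂ R) = 0 := by
  ext i (j | j) <;> simp

lemma toColumns₂_sub' {m n₁ n₂ R : Type*} [Sub R] (A B : Matrix m (n₁ ⊕ n₂) R) :
    (A - B).toCols₂ = A.toCols₂ - B.toCols₂ := rfl

lemma innerBi_zero {α ι : Type*} [Fintype α] [Fintype ι]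
    (Xt : Matrix α α K[X]) (ζt : Matrix ι ι K[X]) :
    innerBi q Xt ζt 0 = 0 := by
  unfold innerBi
  rw [twMatMul_zero_left, twMatMul_zero_right, sub_zero]

lemma extEq_of_eq {α ι : Type*} [Fintype α] [Fintype ι]
    (Xt : Matrix α α K[X]) (ζt : Matrix ι ι K[X]) {δ δ' : Matrix ι α K[X]}
    (h : δ = δ') : ExtEq q Xt ζt δ δ' :=
  ⟨0, by rw [h, sub_self, innerBi_zero]⟩

lemma innerBi_blocks (hq0 : q ≠ 0) {α α' ι : Type*} [Fintype α] [Fintype α']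
    [Fintype ι] (Φt : Matrix α α K[X]) (Ψt : Matrix α' α' K[X])
    (δt : Matrix α' α K[X]) (ζt : Matrix ι ι K[X])
    (V₁ : Matrix ι α K[X]) (V₂ : Matrix ι α' K[X]) :
    innerBi q (fromBlocks Φt 0 δt Ψt) ζt (fromCols V₁ V₂) =
      fromCols (twMatMul q V₁ Φt + twMatMul q V₂ δt - twMatMul q ζt V₁)
        (twMatMul q V₂ Ψt - twMatMul q ζt V₂) := by
  unfold innerBi
  rw [twMatMul_fromColumns_fromBlocks, twMatMul_fromColumns_right, fromColumns_sub']

end TwLemmas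

/-- the split short exact sequence of Ext groups associated with a
split extension.  Let `Φ, Ψ, ζ` be t-modules with `Hom_τ(Ψ,ζ) = 0`, let
`δ_t = U₀·Φ_t − Ψ_t·U₀` be a split biderivation and `Υ_t = [[Φ_t,0],[δ_t,Ψ_t]]`.
Writing biderivations `Υ → ζ` as block rows `(δ₁ | δ₂)`, the maps
`i : [δ₁] ↦ [(−δ₁|0)]` and `π : [(δ₁|δ₂)] ↦ [−δ₂]` are well defined
`𝔽_q[t]`-equivariant maps forming a short exact sequence
`0 → Ext¹_τ(Φ,ζ) → Ext¹_τ(Υ,ζ) → Ext¹_τ(Ψ,ζ) → 0`, which splits via the well defined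
`𝔽_q[t]`-equivariant section `g : [δ₂] ↦ [(δ₂·U₀ | −δ₂)]` satisfying `π ∘ g = id`. -/
theorem split_ext_sequence
    {K : Type*} [Field K] (p s q : ℕ) [Fact p.Prime] (hs : 0 < s) (hq : q = p ^ s)
    [Algebra (GaloisField p s) K] (θ : K) {d e f : ℕ}
    (Φt : Matrix (Fin d) (Fin d) (Polynomial K))
    (Ψt : Matrix (Fin e) (Fin e) (Polynomial K))
    (ζt : Matrix (Fin f) (Fin f) (Polynomial K))
    (hΦ : IsTModule θ Φt) (hΨ : IsTModule θ Ψt) (hζ : IsTModule θ ζt)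
    (hhom : ∀ F : Matrix (Fin f) (Fin e) (Polynomial K),
      twMatMul q F Ψt = twMatMul q ζt F → F = 0)
    (U₀ δt : Matrix (Fin e) (Fin d) (Polynomial K))
    (hδ : δt = twMatMul q U₀ Φt - twMatMul q Ψt U₀)
    (Υt : Matrix (Fin d ⊕ Fin e) (Fin d ⊕ Fin e) (Polynomial K))
    (hΥ : Υt = Matrix.fromBlocks Φt 0 δt Ψt) :
    -- `i` is well defined
    (∀ δ₁ δ₁' : Matrix (Fin f) (Fin d) (Polynomial K),
      ExtEq q Φt ζt δ₁ δ₁' →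
      ExtEq q Υt ζt (Matrix.fromCols (-δ₁) 0) (Matrix.fromCols (-δ₁') 0)) ∧
    -- `i` commutes with the action of `t`
    (∀ δ₁ : Matrix (Fin f) (Fin d) (Polynomial K),
      ExtEq q Υt ζt (Matrix.fromCols (-(twMatMul q ζt δ₁)) 0)
        (twMatMul q ζt (Matrix.fromCols (-δ₁) 0))) ∧
    -- `π` is well defined
    (∀ η η' : Matrix (Fin f) (Fin d ⊕ Fin e) (Polynomial K),
      ExtEq q Υt ζt η η' →
      ExtEq q Ψt ζt (-(Matrix.of fun i j => η i (Sum.inr j)))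
        (-(Matrix.of fun i j => η' i (Sum.inr j)))) ∧
    -- `π` commutes with the action of `t`
    (∀ η : Matrix (Fin f) (Fin d ⊕ Fin e) (Polynomial K),
      ExtEq q Ψt ζt (-(Matrix.of fun i j => twMatMul q ζt η i (Sum.inr j)))
        (twMatMul q ζt (-(Matrix.of fun i j => η i (Sum.inr j))))) ∧
    -- `i` is injective
    (∀ δ₁ : Matrix (Fin f) (Fin d) (Polynomial K),
      ExtEq q Υt ζt (Matrix.fromCols (-δ₁) 0) 0 → ExtEq q Φt ζt δ₁ 0) ∧
    -- exactness in the middle:  `ker π ⊆ im i`  (the inclusion `im i ⊆ ker π` being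
    -- immediate since the second block of `(−δ₁|0)` is `0`)
    (∀ η : Matrix (Fin f) (Fin d ⊕ Fin e) (Polynomial K),
      ExtEq q Ψt ζt (-(Matrix.of fun i j => η i (Sum.inr j))) 0 →
      ∃ δ₁ : Matrix (Fin f) (Fin d) (Polynomial K),
        ExtEq q Υt ζt η (Matrix.fromCols (-δ₁) 0)) ∧
    -- `π` is surjective
    (∀ δ₂ : Matrix (Fin f) (Fin e) (Polynomial K),
      ∃ η : Matrix (Fin f) (Fin d ⊕ Fin e) (Polynomial K),
        ExtEq q Ψt ζt (-(Matrix.of fun i j => η i (Sum.inr j))) δ₂) ∧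
    -- the section `g` is well defined
    (∀ δ₂ δ₂' : Matrix (Fin f) (Fin e) (Polynomial K),
      ExtEq q Ψt ζt δ₂ δ₂' →
      ExtEq q Υt ζt (Matrix.fromCols (twMatMul q δ₂ U₀) (-δ₂))
        (Matrix.fromCols (twMatMul q δ₂' U₀) (-δ₂'))) ∧
    -- `g` commutes with the action of `t`
    (∀ δ₂ : Matrix (Fin f) (Fin e) (Polynomial K),
      ExtEq q Υt ζt
        (Matrix.fromCols (twMatMul q (twMatMul q ζt δ₂) U₀) (-(twMatMul q ζt δ₂)))
        (twMatMul q ζt (Matrix.fromCols (twMatMul q δ₂ U₀) (-δ₂)))) ∧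
    -- `π ∘ g = id`
    (∀ δ₂ : Matrix (Fin f) (Fin e) (Polynomial K),
      ExtEq q Ψt ζt
        (-(Matrix.of fun i j =>
          (Matrix.fromCols (twMatMul q δ₂ U₀) (-δ₂)) i (Sum.inr j))) δ₂) := by
  subst hq hΥ
  have hq0 : p ^ s ≠ 0 := pow_ne_zero s (Fact.out : p.Prime).ne_zero
  haveI : CharP K p :=
    charP_of_injective_algebraMap (algebraMap (GaloisField p s) K).injective p
  have hF : ∀ (x y : K) (n : ℕ),
      (x + y) ^ (p ^ s) ^ n = x ^ (p ^ s) ^ n + y ^ (p ^ s) ^ n := by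
    intro x y n
    rw [← pow_mul]
    exact add_pow_char_pow x y p (s * n)
  set q := p ^ s with hqdef
  refine ⟨?_, ?_, ?_, ?_, ?_, ?_, ?_, ?_, ?_, ?_⟩
  · -- i well defined
    rintro δ₁ δ₁' ⟨V, hV⟩
    refine ⟨fromCols (-V) 0, ?_⟩
    rw [innerBi_blocks hq0, fromColumns_sub']
    rw [twMatMul_zero_left, add_zero, twMatMul_zero_left, twMatMul_zero_right,
      twMatMul_neg_left, twMatMul_neg_right hq0 hF]
    unfold innerBi at hV
    rw [Matrix.fromCols_ext_iff]
    refine ⟨?_, by abel⟩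
    rw [show -δ₁ - -δ₁' = -(δ₁ - δ₁') by abel, hV]; abel
  · -- i equivariant
    intro δ₁
    refine extEq_of_eq _ _ ?_
    rw [twMatMul_fromColumns_right, twMatMul_neg_right hq0 hF, twMatMul_zero_right]
  · -- π well defined
    rintro η η' ⟨V, hV⟩
    refine ⟨-V.toCols₂, ?_⟩
    rw [← Matrix.fromCols_toCols V, innerBi_blocks hq0] at hV
    have h2 := congrArg Matrix.toCols₂ hV
    rw [toColumns₂_sub', Matrix.toCols₂_fromCols] at h2
    show -η.toCols₂ - -η'.toCols₂ = _
    unfold innerBi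
    rw [twMatMul_neg_left, twMatMul_neg_right hq0 hF]
    rw [show -η.toCols₂ - -η'.toCols₂ = -(η.toCols₂ - η'.toCols₂) by abel,
      h2]
    abel
  · -- π equivariant
    intro η
    refine extEq_of_eq _ _ ?_
    show -(twMatMul q ζt η).toCols₂ = _
    rw [toColumns₂_twMatMul, twMatMul_neg_right hq0 hF]
    rfl
  · -- i injective
    rintro δ₁ ⟨V, hV⟩
    rw [← Matrix.fromCols_toCols V, innerBi_blocks hq0] at hV
    have h1 := congrArg Matrix.toCols₁ hV
    have h2 := congrArg Matrix.toCols₂ hV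
    rw [sub_zero] at h1 h2
    simp only [Matrix.toCols₁_fromCols, Matrix.toCols₂_fromCols] at h1 h2
    have hV2 : V.toCols₂ = 0 := hhom _ (sub_eq_zero.mp h2.symm)
    rw [hV2, twMatMul_zero_left, add_zero] at h1
    refine ⟨-V.toCols₁, ?_⟩
    unfold innerBi
    rw [twMatMul_neg_left, twMatMul_neg_right hq0 hF, sub_zero,
      show δ₁ = -(-δ₁) by abel, h1]
    abel
  · -- exactness in the middle
    rintro η ⟨V, hV⟩
    rw [sub_zero] at hV
    unfold innerBi at hV
    refine ⟨twMatMul q (-V) δt - η.toCols₁, ⟨fromCols 0 (-V), ?_⟩⟩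
    rw [innerBi_blocks hq0, ← Matrix.fromCols_toCols η, fromColumns_sub']
    rw [twMatMul_zero_left, zero_add, twMatMul_zero_right,
      twMatMul_neg_left, twMatMul_neg_left, twMatMul_neg_right hq0 hF,
      Matrix.fromCols_ext_iff]
    constructor
    · simp only [Matrix.toCols₁_fromCols, Matrix.toCols₂_fromCols]
      abel
    · rw [sub_zero, show η.toCols₂ = -(-η.toCols₂) by rw [neg_neg]]
      rw [show -η.toCols₂ = twMatMul q V Ψt - twMatMul q ζt V from hV]
      abel
  · -- π surjective
    intro δ₂
    exact ⟨fromCols 0 (-δ₂), extEq_of_eq _ _ (by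
      show -(fromCols (0 : Matrix (Fin f) (Fin d) K[X]) (-δ₂)).toCols₂ = δ₂
      rw [Matrix.toCols₂_fromCols, neg_neg])⟩
  · -- g well defined
    rintro δ₂ δ₂' ⟨V, hV⟩
    unfold innerBi at hV
    refine ⟨fromCols (twMatMul q V U₀) (-V), ?_⟩
    rw [innerBi_blocks hq0, fromColumns_sub', Matrix.fromCols_ext_iff]
    constructor
    · rw [hδ, twMatMul_neg_left, twMatMul_sub_right hq0 hF,
        ← twMatMul_assoc hq0 hF V U₀ Φt, ← twMatMul_assoc hq0 hF V Ψt U₀,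
        ← twMatMul_assoc hq0 hF ζt V U₀,
        ← twMatMul_sub_left δ₂ δ₂' U₀, hV, twMatMul_sub_left]
      abel
    · rw [twMatMul_neg_left, twMatMul_neg_right hq0 hF,
        show -δ₂ - -δ₂' = -(δ₂ - δ₂') by abel, hV]
      abel
  · -- g equivariant
    intro δ₂
    refine extEq_of_eq _ _ ?_
    rw [twMatMul_fromColumns_right, twMatMul_assoc hq0 hF,
      twMatMul_neg_right hq0 hF]
  · -- π ∘ g = id
    intro δ₂
    refine extEq_of_eq _ _ ?_
    show -(fromCols (twMatMul q δ₂ U₀) (-δ₂)).toCols₂ = δ₂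
    rw [Matrix.toCols₂_fromCols, neg_neg]
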